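/- arXiv:2106.13735 — 2 statements merged into one kernel-verified Lean document; each statement's English description precedes it below -/
import Mathlib

section
/- Let p > 3 be a prime and let j, k, y ∈ 𝔽_p with y ≠ 0. Let V be the 4-dimensional 𝔽_p-vector space with basis P, Q, R, S, equipped with the bilinear multiplication determined on basis elements by PS = SS = QS = RS = PP = SP = QP = PQ = RQ = QR = 0, RR = jP + kS, QQ = −yS, RP = yS, SQ = −P, PR = yS, SR = −Q. Then V is a pre-Lie algebra, i.e., (ab)c − a(bc) = (ba)c − b(ac) for all a, b, c ∈ V; moreover V is left nilpotent but not right nilpotent. -/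
/-- A left brace: `(A, +)` an abelian group, `(A, *)` a group (we write the brace
multiplication `∘` as `*`), with `a * (b + c) + a = a * b + a * c`. -/
class LeftBrace (A : Type*) extends Group A, AddCommGroup A where
  mul_add_eq : ∀ a b c : A, a * (b + c) + a = a * b + a * c

namespace LeftBrace

/-- The star operation `a * b = a∘b - a - b` of a left brace. -/
def star {A : Type*} [LeftBrace A] (a b : A) : A := a * b - a - b

end LeftBrace

/-- An `𝔽ₚ`-brace: a left brace whose additive group is a `ZMod p`-vector space
with `a * (α • b) = α • (a * b)`. -/
class FpBrace (p : ℕ) (A : Type*) extends LeftBrace A, Module (ZMod p) A where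
  star_smul' : ∀ (α : ZMod p) (a b : A),
    LeftBrace.star a (α • b) = α • LeftBrace.star a b

/-- The left chain `A^1 = A`, `A^{i+1} = A * A^i` (additive subgroup generated by
`a * b`, `a ∈ A`, `b ∈ A^i`). -/
def lpow (A : Type*) [LeftBrace A] : ℕ → AddSubgroup A
  | 0 => ⊤
  | 1 => ⊤
  | (n+2) => AddSubgroup.closure
      {x : A | ∃ a : A, ∃ b ∈ lpow A (n+1), x = LeftBrace.star a b}

/-- The right chain `A^{(1)} = A`, `A^{(i+1)} = A^{(i)} * A`. -/
def rpow (A : Type*) [LeftBrace A] : ℕ → AddSubgroup A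
  | 0 => ⊤
  | 1 => ⊤
  | (n+2) => AddSubgroup.closure
      {x : A | ∃ a ∈ rpow A (n+1), ∃ b : A, x = LeftBrace.star a b}

/-- A left brace is right nilpotent if `A^{(n)} = 0` for some `n`. -/
def IsRightNilpotent (A : Type*) [LeftBrace A] : Prop := ∃ n, rpow A n = ⊥

/-- The defining relations of the group XV on generators `P, Q, R, S`. -/
def XVRelations {A : Type*} [LeftBrace A] (p : ℕ) (P Q R S : A) : Prop :=
  Q * S = S * Q * P ∧ Q * R = R * Q ∧ P * S = S * P ∧ P * Q = Q * P ∧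
  P * R = R * P ∧ R * S = S * R * Q ∧
  P ^ p = 1 ∧ Q ^ p = 1 ∧ R ^ p = 1 ∧ S ^ p = 1

/-- The multiplicative group of the brace `A` is the group XV, with generators
`P, Q, R, S` satisfying the XV relations. -/
def IsXVBrace (p : ℕ) (A : Type*) [LeftBrace A] (P Q R S : A) : Prop :=
  Nat.card A = p ^ 4 ∧ Subgroup.closure {P, Q, R, S} = ⊤ ∧ XVRelations p P Q R S


/-- The Multiplicative Table with parameters `y, i, k`. -/
def MultTable {p : ℕ} {A : Type*} [LeftBrace A] [Module (ZMod p) A]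
    (P Q R S : A) (y i k : ZMod p) : Prop :=
  LeftBrace.star P P = 0 ∧ LeftBrace.star P Q = 0 ∧
  LeftBrace.star P R = y • S ∧ LeftBrace.star P S = 0 ∧
  LeftBrace.star Q P = 0 ∧ LeftBrace.star Q Q = -(y • S) ∧
  LeftBrace.star Q R = ((2 : ZMod p)⁻¹ * y) • S ∧ LeftBrace.star Q S = 0 ∧
  LeftBrace.star R P = y • S ∧ LeftBrace.star R Q = ((2 : ZMod p)⁻¹ * y) • S ∧
  LeftBrace.star R R = i • P + k • S ∧ LeftBrace.star R S = 0 ∧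
  LeftBrace.star S P = 0 ∧ LeftBrace.star S Q = -P ∧
  LeftBrace.star S R = -Q + P - ((2 : ZMod p)⁻¹ * y) • S ∧ LeftBrace.star S S = 0

/-- Additive subgroup generated by all `x * y`, `x ∈ X`, `y ∈ Y`. -/
def starSpan {A : Type*} [LeftBrace A] (X Y : AddSubgroup A) : AddSubgroup A :=
  AddSubgroup.closure {z : A | ∃ x ∈ X, ∃ y ∈ Y, z = LeftBrace.star x y}

/-- An ideal of a left brace: an additive subgroup closed under all `λ_a` and
normal in `(A, ∘)`. -/
def IsBraceIdeal {A : Type*} [LeftBrace A] (I : AddSubgroup A) : Prop :=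
  (∀ a : A, ∀ b ∈ I, a * b - a ∈ I) ∧ (∀ a : A, ∀ b ∈ I, a * b * a⁻¹ ∈ I)

/-- A brace is prime if the product of any two nonzero ideals is nonzero. -/
def IsPrimeBrace (A : Type*) [LeftBrace A] : Prop :=
  ∀ I J : AddSubgroup A, IsBraceIdeal I → IsBraceIdeal J → I ≠ ⊥ → J ≠ ⊥ →
    starSpan I J ≠ ⊥

/-- Left chain of a nonassociative algebra given by a bilinear map. -/
def preLieL (R : Type*) [CommRing R] (V : Type*) [AddCommGroup V] [Module R V]
    (mul : V →ₗ[R] V →ₗ[R] V) : ℕ → Submodule R V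
  | 0 => ⊤
  | 1 => ⊤
  | (n+2) => Submodule.span R
      {x : V | ∃ a : V, ∃ b ∈ preLieL R V mul (n+1), x = mul a b}

/-- Right chain of a nonassociative algebra given by a bilinear map. -/
def preLieR (R : Type*) [CommRing R] (V : Type*) [AddCommGroup V] [Module R V]
    (mul : V →ₗ[R] V →ₗ[R] V) : ℕ → Submodule R V
  | 0 => ⊤
  | 1 => ⊤
  | (n+2) => Submodule.span R
      {x : V | ∃ a ∈ preLieR R V mul (n+1), ∃ b : V, x = mul a b}

/-- The defining relations of the group XIV on generators `P, Q, R, S`. -/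
def XIVRelations {A : Type*} [LeftBrace A] (p : ℕ) (P Q R S : A) : Prop :=
  Q * P = P * Q ∧ Q * R = R * Q ∧ Q * S = S * Q ∧
  P * R = R * P ∧ P * S = S * P ∧ R * S = S * R * P ∧
  P ^ p = 1 ∧ Q ^ p = 1 ∧ R ^ p = 1 ∧ S ^ p = 1

/-- the displayed multiplication table on the `𝔽ₚ`-vector space with
basis `P, Q, R, S` defines a pre-Lie algebra which is left nilpotent but not right
nilpotent. -/
theorem statement17 (p : ℕ) (hp : p.Prime) (hp3 : 3 < p)
    (j k y : ZMod p) (hy : y ≠ 0)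
    (V : Type*) [AddCommGroup V] [Module (ZMod p) V]
    (B : Module.Basis (Fin 4) (ZMod p) V) (P Q R S : V)
    (hB : B 0 = P ∧ B 1 = Q ∧ B 2 = R ∧ B 3 = S)
    (mul : V →ₗ[ZMod p] V →ₗ[ZMod p] V)
    (hPS : mul P S = 0) (hSS : mul S S = 0) (hQS : mul Q S = 0) (hRS : mul R S = 0)
    (hPP : mul P P = 0) (hSP : mul S P = 0) (hQP : mul Q P = 0) (hPQ : mul P Q = 0)
    (hRQ : mul R Q = 0) (hQR : mul Q R = 0)
    (hRR : mul R R = j • P + k • S) (hQQ : mul Q Q = -(y • S))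
    (hRP : mul R P = y • S) (hSQ : mul S Q = -P) (hPR : mul P R = y • S)
    (hSR : mul S R = -Q) :
    (∀ a b c : V, mul (mul a b) c - mul a (mul b c)
        = mul (mul b a) c - mul b (mul a c)) ∧
    (∃ n, preLieL (ZMod p) V mul n = ⊥) ∧
    ¬ (∃ n, preLieR (ZMod p) V mul n = ⊥) := by
  haveI : Fact p.Prime := ⟨hp⟩
  obtain ⟨rfl, rfl, rfl, rfl⟩ := hB
  -- basic facts about multiplication by basis elements on the right
  have fS : ∀ a : V, mul a (B 3) = 0 := by
    intro a
    have h : Submodule.span (ZMod p) (Set.range B) ≤ LinearMap.ker (mul.flip (B 3)) := by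
      rw [Submodule.span_le]
      rintro _ ⟨i, rfl⟩
      fin_cases i <;>
        simp [LinearMap.mem_ker, hPS, hQS, hRS, hSS]
    have ha : a ∈ Submodule.span (ZMod p) (Set.range B) := by rw [B.span_eq]; trivial
    simpa using h ha
  have fP : ∀ a : V, mul a (B 0) ∈ Submodule.span (ZMod p) {(B 3 : V)} := by
    intro a
    have h : Submodule.span (ZMod p) (Set.range B) ≤
        Submodule.comap (mul.flip (B 0)) (Submodule.span (ZMod p) {(B 3 : V)}) := by
      rw [Submodule.span_le]
      rintro _ ⟨i, rfl⟩
      fin_cases i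
      · simp [hPP]
      · simp [hQP]
      · show (mul (B 2)) (B 0) ∈ Submodule.span (ZMod p) {(B 3 : V)}
        rw [hRP]
        exact Submodule.smul_mem _ _ (Submodule.mem_span_singleton_self _)
      · simp [hSP]
    have ha : a ∈ Submodule.span (ZMod p) (Set.range B) := by rw [B.span_eq]; trivial
    exact h ha
  have fQ : ∀ a : V, mul a (B 1) ∈ Submodule.span (ZMod p) {(B 0 : V), B 3} := by
    intro a
    have h : Submodule.span (ZMod p) (Set.range B) ≤
        Submodule.comap (mul.flip (B 1)) (Submodule.span (ZMod p) {(B 0 : V), B 3}) := by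
      rw [Submodule.span_le]
      rintro _ ⟨i, rfl⟩
      fin_cases i
      · simp [hPQ]
      · show (mul (B 1)) (B 1) ∈ Submodule.span (ZMod p) {(B 0 : V), B 3}
        rw [hQQ]
        exact neg_mem (Submodule.smul_mem _ _ (Submodule.subset_span (by simp)))
      · simp [hRQ]
      · show (mul (B 3)) (B 1) ∈ Submodule.span (ZMod p) {(B 0 : V), B 3}
        rw [hSQ]
        exact neg_mem (Submodule.subset_span (by simp))
    have ha : a ∈ Submodule.span (ZMod p) (Set.range B) := by rw [B.span_eq]; trivial
    exact h ha
  have fR : ∀ a : V, mul a (B 2) ∈ Submodule.span (ZMod p) {(B 0 : V), B 1, B 3} := by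
    intro a
    have h : Submodule.span (ZMod p) (Set.range B) ≤
        Submodule.comap (mul.flip (B 2)) (Submodule.span (ZMod p) {(B 0 : V), B 1, B 3}) := by
      rw [Submodule.span_le]
      rintro _ ⟨i, rfl⟩
      fin_cases i
      · show (mul (B 0)) (B 2) ∈ Submodule.span (ZMod p) {(B 0 : V), B 1, B 3}
        rw [hPR]
        exact Submodule.smul_mem _ _ (Submodule.subset_span (by simp))
      · show (mul (B 1)) (B 2) ∈ Submodule.span (ZMod p) {(B 0 : V), B 1, B 3}
        rw [hQR]; exact zero_mem _
      · show (mul (B 2)) (B 2) ∈ Submodule.span (ZMod p) {(B 0 : V), B 1, B 3}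
        rw [hRR]
        exact add_mem (Submodule.smul_mem _ _ (Submodule.subset_span (by simp)))
          (Submodule.smul_mem _ _ (Submodule.subset_span (by simp)))
      · show (mul (B 3)) (B 2) ∈ Submodule.span (ZMod p) {(B 0 : V), B 1, B 3}
        rw [hSR]
        exact neg_mem (Submodule.subset_span (by simp))
    have ha : a ∈ Submodule.span (ZMod p) (Set.range B) := by rw [B.span_eq]; trivial
    exact h ha
  refine ⟨?_, ?_, ?_⟩
  · -- pre-Lie identity
    intro a b c
    rw [← B.sum_repr a, ← B.sum_repr b, ← B.sum_repr c]
    simp only [Fin.sum_univ_four, map_add, map_smul, LinearMap.add_apply,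
      LinearMap.smul_apply, hPS, hSS, hQS, hRS, hPP, hSP, hQP, hPQ, hRQ, hQR,
      hRR, hQQ, hRP, hSQ, hPR, hSR, smul_zero, smul_add, smul_neg, smul_smul,
      add_zero, zero_add, neg_zero, map_neg, LinearMap.neg_apply, map_zero,
      LinearMap.zero_apply]
    module
  · -- left nilpotent
    set M123 : Submodule (ZMod p) V := Submodule.span (ZMod p) {(B 0 : V), B 1, B 3} with hM123
    set M03 : Submodule (ZMod p) V := Submodule.span (ZMod p) {(B 0 : V), B 3} with hM03
    set M3 : Submodule (ZMod p) V := Submodule.span (ZMod p) {(B 3 : V)} with hM3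
    have step : ∀ (n : ℕ) (M N : Submodule (ZMod p) V),
        preLieL (ZMod p) V mul (n+1) ≤ M →
        (∀ a b : V, b ∈ M → mul a b ∈ N) →
        preLieL (ZMod p) V mul (n+2) ≤ N := by
      intro n M N hM hN
      show Submodule.span (ZMod p)
        {x : V | ∃ a : V, ∃ b ∈ preLieL (ZMod p) V mul (n+1), x = mul a b} ≤ N
      rw [Submodule.span_le]
      rintro x ⟨a, b, hb, rfl⟩
      exact hN a b (hM hb)
    have key2 : ∀ a b : V, mul a b ∈ M123 := by
      intro a b
      have h : Submodule.span (ZMod p) (Set.range B) ≤ Submodule.comap (mul a) M123 := by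
        rw [Submodule.span_le]
        rintro _ ⟨i, rfl⟩
        fin_cases i
        · exact Submodule.span_mono (Set.singleton_subset_iff.mpr (by simp)) (fP a)
        · exact Submodule.span_mono
            (by intro x hx; simp only [Set.mem_insert_iff, Set.mem_singleton_iff] at hx
                rcases hx with h | h <;> simp [h]) (fQ a)
        · exact fR a
        · show (mul a) (B 3) ∈ M123
          rw [fS a]; exact zero_mem _
      have hb : b ∈ Submodule.span (ZMod p) (Set.range B) := by rw [B.span_eq]; trivial
      exact h hb
    have key3 : ∀ a b : V, b ∈ M123 → mul a b ∈ M03 := by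
      intro a b hb
      have h : M123 ≤ Submodule.comap (mul a) M03 := by
        rw [hM123, Submodule.span_le]
        intro x hx
        simp only [Set.mem_insert_iff, Set.mem_singleton_iff] at hx
        rcases hx with rfl | rfl | rfl <;> simp only [SetLike.mem_coe, Submodule.mem_comap]
        · exact Submodule.span_mono (Set.singleton_subset_iff.mpr (by simp)) (fP a)
        · exact fQ a
        · rw [fS a]; exact zero_mem _
      exact h hb
    have key4 : ∀ a b : V, b ∈ M03 → mul a b ∈ M3 := by
      intro a b hb
      have h : M03 ≤ Submodule.comap (mul a) M3 := by
        rw [hM03, Submodule.span_le]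
        intro x hx
        simp only [Set.mem_insert_iff, Set.mem_singleton_iff] at hx
        rcases hx with rfl | rfl <;> simp only [SetLike.mem_coe, Submodule.mem_comap]
        · exact fP a
        · rw [fS a]; exact zero_mem _
      exact h hb
    have key5 : ∀ a b : V, b ∈ M3 → mul a b = 0 := by
      intro a b hb
      rw [hM3, Submodule.mem_span_singleton] at hb
      obtain ⟨c, rfl⟩ := hb
      rw [map_smul, fS a, smul_zero]
    have hL2 : preLieL (ZMod p) V mul 2 ≤ M123 :=
      step 0 ⊤ M123 le_top (fun a b _ => key2 a b)
    have hL3 : preLieL (ZMod p) V mul 3 ≤ M03 := step 1 M123 M03 hL2 key3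
    have hL4 : preLieL (ZMod p) V mul 4 ≤ M3 := step 2 M03 M3 hL3 key4
    have hL5 : preLieL (ZMod p) V mul 5 ≤ ⊥ :=
      step 3 M3 ⊥ hL4 (fun a b hb => by rw [Submodule.mem_bot]; exact key5 a b hb)
    exact ⟨5, le_bot_iff.mp hL5⟩
  · -- not right nilpotent
    rintro ⟨n, hn⟩
    have hS : ∀ m, (B 3 : V) ∈ preLieR (ZMod p) V mul m ∧
        (B 0 : V) ∈ preLieR (ZMod p) V mul m := by
      intro m
      induction m with
      | zero => exact ⟨trivial, trivial⟩
      | succ m ih =>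
        match m, ih with
        | 0, _ => exact ⟨trivial, trivial⟩
        | (m+1), ih =>
          have hspan : preLieR (ZMod p) V mul (m+2) = Submodule.span (ZMod p)
              {x : V | ∃ a ∈ preLieR (ZMod p) V mul (m+1), ∃ b : V, x = mul a b} := rfl
          constructor
          · have h1 : y • (B 3 : V) ∈ preLieR (ZMod p) V mul (m+2) := by
              rw [hspan]
              exact Submodule.subset_span ⟨B 0, ih.2, B 2, hPR.symm⟩
            have h2 := Submodule.smul_mem _ y⁻¹ h1
            rwa [smul_smul, inv_mul_cancel₀ hy, one_smul] at h2
          · have h1 : -(B 0 : V) ∈ preLieR (ZMod p) V mul (m+2) := by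
              rw [hspan]
              exact Submodule.subset_span ⟨B 3, ih.1, B 1, hSQ.symm⟩
            exact neg_mem_iff.mp h1
    have h3 := (hS n).1
    rw [hn, Submodule.mem_bot] at h3
    exact B.ne_zero 3 h3
end

section
/- Let p > 3 be a prime and let A be an 𝔽_p-brace of cardinality p^4 whose multiplicative group (A,∘) is isomorphic to the group XIV. Then A is right nilpotent. -/
namespace S19

section Basics

variable {A : Type*} [LeftBrace A]

local notation a " ⋆ " b => LeftBrace.star a b

lemma mul_zero_eq (a : A) : a * (0:A) = a := by
  have h := LeftBrace.mul_add_eq a 0 0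
  rw [add_zero] at h
  exact (add_left_cancel h).symm

lemma one_eq_zero : (1 : A) = 0 := by
  have h := mul_zero_eq (1 : A)
  rw [one_mul] at h
  exact h.symm

lemma star_add_right (a b c : A) : (a ⋆ (b + c)) = (a ⋆ b) + (a ⋆ c) := by
  have h := LeftBrace.mul_add_eq a b c
  have h2 : a * (b+c) = a*b + a*c - a := by rw [← h]; abel
  simp only [LeftBrace.star]
  rw [h2]; abel

lemma star_zero_right (a : A) : (a ⋆ (0:A)) = 0 := by
  have h := star_add_right a 0 0
  rw [add_zero] at h
  exact (left_eq_add.mp h)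

lemma star_sub_right (a x y : A) : (a ⋆ (x - y)) = (a ⋆ x) - (a ⋆ y) := by
  have h := star_add_right a (x - y) y
  rw [sub_add_cancel] at h
  rw [h]; abel

lemma star_nsmul_right (a : A) (k : ℕ) (x : A) : (a ⋆ (k • x)) = k • (a ⋆ x) := by
  induction k with
  | zero => simpa using star_zero_right a
  | succ k ih => rw [succ_nsmul, succ_nsmul, star_add_right, ih]

lemma star_zero_left (b : A) : ((0:A) ⋆ b) = 0 := by
  have h0 : (0:A) * b = b := by rw [← one_eq_zero, one_mul]
  simp only [LeftBrace.star, h0]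
  abel

/-- `λ_a b = a * b - a`. -/
def lam (a b : A) : A := a * b - a

lemma lam_def (a b : A) : lam a b = a * b - a := rfl

lemma mul_eq (a b : A) : a * b = a + lam a b := by rw [lam_def]; abel

lemma lam_eq_star_add (a b : A) : lam a b = (a ⋆ b) + b := by
  simp only [LeftBrace.star, lam_def]; abel

lemma lam_add (a x y : A) : lam a (x + y) = lam a x + lam a y := by
  simp only [lam_eq_star_add, star_add_right]; abel

lemma lam_sub (a x y : A) : lam a (x - y) = lam a x - lam a y := by
  simp only [lam_eq_star_add, star_sub_right]; abel

lemma lam_zero (a : A) : lam a 0 = 0 := by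
  simp only [lam_eq_star_add, star_zero_right, add_zero]

lemma mul_sub_eq (a x y : A) : a * (x - y) = a * x - a * y + a := by
  have h := lam_sub a x y
  simp only [lam_def] at h
  have h2 : a * (x - y) = (a*x - a - (a*y - a)) + a := by rw [← h]; abel
  rw [h2]; abel

lemma lam_mul (a b x : A) : lam (a*b) x = lam a (lam b x) := by
  rw [lam_def, lam_def, lam_def, mul_assoc, mul_sub_eq]
  abel

lemma lam_one (x : A) : lam (1:A) x = x := by
  rw [lam_def, one_mul, one_eq_zero]; abel

lemma lam_inv_lam (a x : A) : lam a⁻¹ (lam a x) = x := by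
  rw [← lam_mul, inv_mul_cancel, lam_one]

lemma lam_lam_inv (a x : A) : lam a (lam a⁻¹ x) = x := by
  rw [← lam_mul, mul_inv_cancel, lam_one]

lemma star_eq_lam_sub (a b : A) : (a ⋆ b) = lam a b - b := by
  rw [lam_eq_star_add]; abel

lemma lam_nsmul (a : A) (k : ℕ) (x : A) : lam a (k • x) = k • lam a x := by
  rw [lam_eq_star_add, lam_eq_star_add, star_nsmul_right, smul_add]

lemma mul_eq_add_star (a b : A) : a * b = a + b + (a ⋆ b) := by
  rw [mul_eq, lam_eq_star_add]; abel

lemma star_comm_of_commute {c g : A} (h : c * g = g * c) : (c ⋆ g) = (g ⋆ c) := by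
  simp only [LeftBrace.star, h]; abel

lemma lam_lam_of_commute {c g : A} (h : c*g = g*c) (x : A) :
    lam c (lam g x) = lam g (lam c x) := by
  rw [← lam_mul, ← lam_mul, h]

lemma star_lam_of_commute {c g : A} (h : c*g = g*c) (x : A) :
    (c ⋆ (lam g x)) = lam g (c ⋆ x) := by
  rw [star_eq_lam_sub, lam_lam_of_commute h, star_eq_lam_sub, lam_sub]

lemma star_star_of_commute {c g : A} (h : c*g = g*c) (x : A) :
    (c ⋆ (g ⋆ x)) = (g ⋆ (c ⋆ x)) := by
  rw [star_eq_lam_sub g x, star_sub_right, star_lam_of_commute h,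
    star_eq_lam_sub g (LeftBrace.star c x), lam_eq_star_add]

/-- Powers of an element `c` with `c ⋆ (c ⋆ c) = 0`. -/
lemma cpow_formula {c : A} (hnn : (c ⋆ (c ⋆ c)) = 0) (k : ℕ) :
    c ^ k = k • c + (k.choose 2) • (c ⋆ c) := by
  induction k with
  | zero =>
      simp [one_eq_zero]
  | succ k ih =>
      have hstar : (c ⋆ (c ^ k)) = k • (c ⋆ c) := by
        rw [ih, star_add_right, star_nsmul_right, star_nsmul_right, hnn, smul_zero, add_zero]
      have hmul : c ^ (k+1) = c + (c ^ k) + (c ⋆ (c ^ k)) := by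
        rw [pow_succ', mul_eq, lam_eq_star_add]; abel
      rw [hmul, hstar, ih, Nat.choose_succ_succ, Nat.choose_one_right]
      rw [add_smul, add_smul, succ_nsmul]
      abel

end Basics

end S19
namespace S19

section Basics2

variable {A : Type*} [LeftBrace A]

local notation a " ⋆ " b => LeftBrace.star a b

lemma socle_mul {a : A} (h : ∀ b : A, (a ⋆ b) = 0) (b : A) : a * b = a + b := by
  rw [mul_eq, lam_eq_star_add, h]; abel

lemma lam_eq_id_of_socle {a : A} (h : ∀ b : A, (a ⋆ b) = 0) (b : A) : lam a b = b := by
  rw [lam_eq_star_add, h, zero_add]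

lemma socle_add_aux {a₁ a₂ : A} (h1 : ∀ b : A, (a₁ ⋆ b) = 0) (h2 : ∀ b : A, (a₂ ⋆ b) = 0)
    (b : A) : ((a₁ + a₂) ⋆ b) = 0 := by
  have hmul : a₁ + a₂ = a₁ * a₂ := by rw [socle_mul h1]
  rw [hmul, star_eq_lam_sub, lam_mul, lam_eq_id_of_socle h2, lam_eq_id_of_socle h1, sub_self]

lemma socle_nsmul_aux {a : A} (h : ∀ b : A, (a ⋆ b) = 0) (k : ℕ) : ∀ b : A,
    ((k • a) ⋆ b) = 0 := by
  induction k with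
  | zero => intro b; simpa using star_zero_left b
  | succ k ih =>
      intro b
      rw [succ_nsmul, add_comm]
      exact socle_add_aux h ih b

lemma lam_socle_aux {t : A} (h : ∀ b : A, (t ⋆ b) = 0) (g x : A) :
    ((lam g t) ⋆ x) = 0 := by
  have hconj : g * t * g⁻¹ = lam g t := by
    have h1 : t * g⁻¹ = t + g⁻¹ := socle_mul h g⁻¹
    have h2 : lam g g⁻¹ = -g := by
      rw [lam_def, mul_inv_cancel, one_eq_zero]; abel
    rw [mul_assoc, h1, mul_eq, lam_add, h2]; abel
  rw [← hconj, star_eq_lam_sub, lam_mul, lam_mul, lam_eq_id_of_socle h, lam_lam_inv, sub_self]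

lemma inv_eq_neg_of_socle {t : A} (h : ∀ b : A, (t ⋆ b) = 0) : t⁻¹ = -t := by
  have : t * (-t) = 1 := by rw [socle_mul h, add_neg_cancel, one_eq_zero]
  exact inv_eq_of_mul_eq_one_right this

end Basics2

section Modules

variable (p : ℕ) [Fact p.Prime] (A : Type*) [FpBrace p A]

local notation a " ⋆ " b => LeftBrace.star a b

/-- The ascending chain of "unipotency" submodules:
`K 0 = 0`, `K (j+1) = {x | ∀ g, g ⋆ x ∈ K j}`. -/
def Kchain : ℕ → Submodule (ZMod p) A
  | 0 => ⊥
  | (j+1) =>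
    { carrier := {x : A | ∀ g : A, (g ⋆ x) ∈ Kchain j}
      add_mem' := by
        intro x y hx hy g
        rw [star_add_right]
        exact add_mem (hx g) (hy g)
      zero_mem' := by
        intro g; rw [star_zero_right]; exact zero_mem _
      smul_mem' := by
        intro r x hx g
        rw [FpBrace.star_smul']
        exact Submodule.smul_mem _ r (hx g) }

/-- The socle: elements `a` with `a ⋆ b = 0` for all `b`. -/
def socle : Submodule (ZMod p) A :=
  { carrier := {a : A | ∀ b : A, (a ⋆ b) = 0}
    zero_mem' := fun b => star_zero_left b
    add_mem' := fun h1 h2 b => socle_add_aux h1 h2 b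
    smul_mem' := by
      intro r a ha
      have h1 : ((r.val • a : A)) ∈ {a : A | ∀ b : A, (a ⋆ b) = 0} :=
        fun b => socle_nsmul_aux ha r.val b
      have h2 : r • a = r.val • a := by
        rw [← Nat.cast_smul_eq_nsmul (ZMod p) r.val a, ZMod.natCast_val, ZMod.cast_id]
      rw [h2]; exact h1 }

variable {p A}

lemma mem_Kchain_succ {x : A} {j : ℕ} :
    x ∈ Kchain p A (j+1) ↔ ∀ g : A, (g ⋆ x) ∈ Kchain p A j := Iff.rfl

lemma mem_socle_iff {a : A} : a ∈ socle p A ↔ ∀ b : A, (a ⋆ b) = 0 := Iff.rfl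

lemma Kchain_mono : ∀ j, Kchain p A j ≤ Kchain p A (j+1)
  | 0 => bot_le
  | (j+1) => fun x hx => by
      rw [mem_Kchain_succ] at *
      exact fun g => Kchain_mono j (hx g)

lemma Kchain_le_of_le {i j : ℕ} (h : i ≤ j) : Kchain p A i ≤ Kchain p A j := by
  induction j with
  | zero => simp_all
  | succ j ih =>
      rcases Nat.lt_or_ge i (j+1) with h' | h'
      · exact le_trans (ih (Nat.lt_succ_iff.mp h')) (Kchain_mono j)
      · have : i = j + 1 := le_antisymm h h'
        simp [this]

lemma star_mem_Kchain {x : A} {j : ℕ} (hx : x ∈ Kchain p A (j+1)) (g : A) :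
    (g ⋆ x) ∈ Kchain p A j := hx g

lemma lam_mem_Kchain {x : A} {j : ℕ} (hx : x ∈ Kchain p A j) (g : A) :
    lam g x ∈ Kchain p A j := by
  cases j with
  | zero =>
      have hx0 : x = 0 := by simpa [Kchain] using hx
      subst hx0
      simp [lam_zero, Kchain]
  | succ j =>
      rw [lam_eq_star_add]
      exact add_mem (Kchain_mono j (hx g)) hx

end Modules

end S19
namespace S19

section Growth

variable {p : ℕ} [Fact p.Prime] {A : Type*} [FpBrace p A]

local notation a " ⋆ " b => LeftBrace.star a b

variable (p) in
/-- `star a` as a linear map. -/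
def stL (a : A) : A →ₗ[ZMod p] A where
  toFun := LeftBrace.star a
  map_add' := star_add_right a
  map_smul' := fun r x => FpBrace.star_smul' r a x

variable (p) in
/-- `lam a` as a linear map. -/
def lamL (a : A) : A →ₗ[ZMod p] A := stL p a + LinearMap.id

@[simp] lemma stL_apply (a x : A) : stL p a x = (a ⋆ x) := rfl

@[simp] lemma lamL_apply (a x : A) : lamL p a x = lam a x := (lam_eq_star_add a x).symm

lemma finite_of_card_dvd (hcard : Nat.card A ∣ p ^ 4) : Finite A := by
  have hp : p.Prime := Fact.out
  have hA0 : Nat.card A ≠ 0 := by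
    intro h0
    rw [h0, zero_dvd_iff] at hcard
    exact pow_ne_zero 4 hp.ne_zero hcard
  exact Nat.finite_of_card_ne_zero hA0

lemma kchain_exists_of_ne_top (hcard : Nat.card A ∣ p ^ 4) {j : ℕ}
    (hj : Kchain p A j ≠ ⊤) :
    ∃ x : A, x ∈ Kchain p A (j+1) ∧ x ∉ Kchain p A j := by
  have hp : p.Prime := Fact.out
  haveI : Finite A := finite_of_card_dvd hcard
  set K := Kchain p A j with hK
  have hle : ∀ g : A, K ≤ K.comap (lamL p g) := fun g x hx => by
    simpa using lam_mem_Kchain hx g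
  letI : SMul A (A ⧸ K) := ⟨fun g x => Submodule.mapQ K K (lamL p g) (hle g) x⟩
  have hsmul_mk : ∀ (g a : A),
      g • (Submodule.Quotient.mk a : A ⧸ K) = Submodule.Quotient.mk (lam g a) := by
    intro g a
    show Submodule.mapQ K K (lamL p g) (hle g) (Submodule.Quotient.mk a) = _
    rw [Submodule.mapQ_apply, lamL_apply]
  letI : MulAction A (A ⧸ K) :=
    { one_smul := fun x => by
        obtain ⟨a, rfl⟩ := Submodule.Quotient.mk_surjective K x
        rw [hsmul_mk, lam_one]
      mul_smul := fun g h x => by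
        obtain ⟨a, rfl⟩ := Submodule.Quotient.mk_surjective K x
        rw [hsmul_mk, hsmul_mk, hsmul_mk, lam_mul] }
  have hPG : IsPGroup p A :=
    IsPGroup.iff_card.mpr (((Nat.dvd_prime_pow hp).mp hcard).imp fun n hn => hn.2)
  haveI : Finite (A ⧸ K) := Finite.of_surjective _ (Submodule.Quotient.mk_surjective K)
  have hmod := hPG.card_modEq_card_fixedPoints (A ⧸ K)
  haveI : Nontrivial (A ⧸ K) :=
    Submodule.Quotient.nontrivial_iff.mpr hj
  have hpQ : p ∣ Nat.card (A ⧸ K) := by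
    haveI : Fintype (A ⧸ K) := Fintype.ofFinite _
    have hcardQ : Fintype.card (A ⧸ K) =
        Fintype.card (ZMod p) ^ Module.finrank (ZMod p) (A ⧸ K) := Module.card_eq_pow_finrank
    have hpos : 0 < Module.finrank (ZMod p) (A ⧸ K) := Module.finrank_pos_iff.mpr ‹_›
    rw [Nat.card_eq_fintype_card, hcardQ, ZMod.card]
    exact dvd_pow_self p hpos.ne'
  have h1 : p ∣ Nat.card (MulAction.fixedPoints A (A ⧸ K)) :=
    Nat.modEq_zero_iff_dvd.mp (hmod.symm.trans (Nat.modEq_zero_iff_dvd.mpr hpQ))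
  have h0mem : (0 : A ⧸ K) ∈ MulAction.fixedPoints A (A ⧸ K) := by
    intro g
    have : (0 : A ⧸ K) = Submodule.Quotient.mk 0 := rfl
    rw [this, hsmul_mk, lam_zero]
  haveI : Nonempty (MulAction.fixedPoints A (A ⧸ K)) := ⟨⟨0, h0mem⟩⟩
  have hcardF : 1 < Nat.card (MulAction.fixedPoints A (A ⧸ K)) := by
    have hpos : 0 < Nat.card (MulAction.fixedPoints A (A ⧸ K)) := Nat.card_pos
    rcases h1 with ⟨m, hm⟩
    have : 2 ≤ p := hp.two_le
    nlinarith [Nat.pos_of_ne_zero (fun h => by rw [h, mul_zero] at hm; omega : m ≠ 0)]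
  haveI : Nontrivial (MulAction.fixedPoints A (A ⧸ K)) := Finite.one_lt_card_iff_nontrivial.mp hcardF
  obtain ⟨f, hf⟩ := exists_ne (⟨0, h0mem⟩ : MulAction.fixedPoints A (A ⧸ K))
  obtain ⟨x, hx⟩ := Submodule.Quotient.mk_surjective K f.1
  refine ⟨x, ?_, ?_⟩
  · rw [mem_Kchain_succ]
    intro g
    have hfg := f.2 g
    rw [← hx, hsmul_mk] at hfg
    have : lam g x - x ∈ K := (Submodule.Quotient.eq K).mp hfg
    rwa [lam_eq_star_add, add_sub_cancel_right] at this
  · intro hmem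
    apply hf
    apply Subtype.ext
    show f.1 = 0
    rw [← hx, Submodule.Quotient.mk_eq_zero]
    exact hmem

lemma Kchain_four_eq_top (hcard : Nat.card A ∣ p ^ 4) : Kchain p A 4 = ⊤ := by
  have hp : p.Prime := Fact.out
  haveI : Finite A := finite_of_card_dvd hcard
  by_contra h4
  have hne : ∀ j, j ≤ 4 → Kchain p A j ≠ ⊤ := by
    intro j hj h
    exact h4 (top_le_iff.mp (h ▸ Kchain_le_of_le hj))
  have hstrict : ∀ j, j ≤ 3 → Kchain p A j < Kchain p A (j+1) := by
    intro j hj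
    obtain ⟨x, hx1, hx2⟩ := kchain_exists_of_ne_top hcard (hne j (by omega))
    exact lt_of_le_of_ne (Kchain_mono j) (fun h => hx2 (h ▸ hx1))
  have hf : ∀ j, j ≤ 4 → j ≤ Module.finrank (ZMod p) (Kchain p A j) := by
    intro j
    induction j with
    | zero => intro _; exact Nat.zero_le _
    | succ j ih =>
        intro hj
        have h1 := ih (by omega)
        have h2 := Submodule.finrank_lt_finrank_of_lt (hstrict j (by omega))
        omega
  have h5 : 5 ≤ Module.finrank (ZMod p) A := by
    have h1 := hf 4 le_rfl
    have h2 := Submodule.finrank_lt_finrank_of_lt (lt_top_iff_ne_top.mpr h4)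
    have h3 : Module.finrank (ZMod p) (⊤ : Submodule (ZMod p) A) = Module.finrank (ZMod p) A :=
      finrank_top _ _
    omega
  haveI : Fintype A := Fintype.ofFinite A
  have hcardA : Fintype.card A = Fintype.card (ZMod p) ^ Module.finrank (ZMod p) A :=
    Module.card_eq_pow_finrank
  rw [Nat.card_eq_fintype_card, hcardA, ZMod.card] at hcard
  have := Nat.le_of_dvd (pow_pos hp.pos 4) hcard
  have hlt : p ^ 4 < p ^ Module.finrank (ZMod p) A :=
    Nat.pow_lt_pow_right hp.one_lt (by omega)
  omega

end Growth

end S19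
namespace S19

section Core

variable {p : ℕ} [Fact p.Prime] {A : Type*} [FpBrace p A]

local notation a " ⋆ " b => LeftBrace.star a b

lemma nsmul_eq_cast_smul (k : ℕ) (x : A) : k • x = ((k : ZMod p)) • x :=
  (Nat.cast_smul_eq_nsmul _ k x).symm

lemma nsmul_eq_zero_of_cast {k : ℕ} (h : (k : ZMod p) = 0) (x : A) : k • x = 0 := by
  rw [nsmul_eq_cast_smul (p := p), h, zero_smul]

lemma two_ne_zero'' (hp3 : 3 < p) : (2 : ZMod p) ≠ 0 := by
  have : ((2:ℕ) : ZMod p) ≠ 0 := by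
    rw [Ne, ZMod.natCast_eq_zero_iff]
    intro hdvd
    have := Nat.le_of_dvd (by norm_num) hdvd
    omega
  simpa using this

lemma choose_two_cast_eq_zero (hp3 : 3 < p) {k : ℕ} (h : (k : ZMod p) = 0) :
    ((k.choose 2 : ℕ) : ZMod p) = 0 := by
  have h2 : 2 * k.choose 2 = k * (k - 1) := by
    rw [Nat.choose_two_right]
    exact Nat.mul_div_cancel' (Nat.even_mul_pred_self k).two_dvd
  have h3 : ((2 : ℕ) : ZMod p) * ((k.choose 2 : ℕ) : ZMod p) = 0 := by
    rw [← Nat.cast_mul, h2, Nat.cast_mul, h, zero_mul]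
  rcases mul_eq_zero.mp h3 with h4 | h4
  · exact absurd (by simpa using h4) (two_ne_zero'' hp3)
  · exact h4

end Core

end S19
namespace S19

section CoreW

variable {p : ℕ} [Fact p.Prime] {A : Type*} [FpBrace p A]

local notation a " ⋆ " b => LeftBrace.star a b

/-- The fundamental identity for a fixed vector `w` and the central element `c`. -/
lemma W1 {c w : A} (hcen : ∀ g : A, c * g = g * c)
    (hn2 : ∀ x : A, (c ⋆ (c ⋆ x)) = 0)
    (hw : ∀ g : A, (g ⋆ w) = 0)
    {g : A} {k : ℕ} (hk : g * w = w * g * c ^ k) :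
    (w ⋆ g) + k • (c ⋆ (w ⋆ g)) + k • (c ⋆ g) + k • c + (k.choose 2) • (c ⋆ c) = 0 := by
  -- fixedness of c ⋆ c
  have hncFix : ∀ a : A, (a ⋆ (c ⋆ c)) = 0 := by
    intro a
    have h1 := star_star_of_commute (hcen a) c   -- c ⋆ (a ⋆ c) = a ⋆ (c ⋆ c)
    have h2 : (a ⋆ c) = (c ⋆ a) := (star_comm_of_commute (hcen a)).symm
    rw [← h1, h2, hn2]
  have hpowc : c ^ k = k • c + (k.choose 2) • (c ⋆ c) := cpow_formula (hn2 c) k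
  -- additive expansions
  have hLHS : g * w = g + w := by
    rw [mul_eq_add_star, hw g, add_zero]
  have hwg : w * g = w + g + (w ⋆ g) := mul_eq_add_star w g
  -- star (w*g) (c^k)
  have hstar : ((w*g) ⋆ (c ^ k)) = k • (c ⋆ (w ⋆ g)) + k • (c ⋆ g) := by
    have e1 : ((w*g) ⋆ (c ^ k)) = lam w (lam g (c ^ k)) - c ^ k := by
      rw [star_eq_lam_sub, lam_mul]
    have e2 : lam g (c ^ k) = k • ((c ⋆ g) + c) + (k.choose 2) • (c ⋆ c) := by
      rw [hpowc, lam_add, lam_nsmul, lam_nsmul, lam_eq_star_add, lam_eq_star_add,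
        hncFix g, zero_add]
      have : (g ⋆ c) = (c ⋆ g) := (star_comm_of_commute (hcen g)).symm
      rw [this]
    have e3 : lam w ((c ⋆ g) + c) = (c ⋆ (w ⋆ g)) + (c ⋆ g) + c := by
      rw [lam_add, lam_eq_star_add, lam_eq_star_add]
      have h1 : (w ⋆ (c ⋆ g)) = (c ⋆ (w ⋆ g)) := (star_star_of_commute (hcen w) g).symm
      have h2 : (w ⋆ c) = (c ⋆ w) := star_comm_of_commute (hcen w) |>.symm
      rw [h1, h2, hw c, zero_add]
    have e4 : lam w ((c ⋆ c)) = (c ⋆ c) := by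
      rw [lam_eq_star_add, hncFix w, zero_add]
    rw [e1, e2, lam_add, lam_nsmul, lam_nsmul, e3, e4, hpowc]
    rw [smul_add (k) ((c ⋆ (w ⋆ g)) + (c ⋆ g)) c, smul_add]
    abel
  -- the main equation
  have hRHS : w * g * c ^ k = w + g + (w ⋆ g) + (k • c + (k.choose 2) • (c ⋆ c))
      + (k • (c ⋆ (w ⋆ g)) + k • (c ⋆ g)) := by
    rw [mul_eq_add_star (w*g) (c^k), hstar, hwg, hpowc]
  have heq := hk
  rw [hLHS, hRHS] at heq
  have h0 : (w ⋆ g) + k • (c ⋆ (w ⋆ g)) + k • (c ⋆ g) + k • c + (k.choose 2) • (c ⋆ c)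
      = (w + g + (w ⋆ g) + (k • c + (k.choose 2) • (c ⋆ c))
        + (k • (c ⋆ (w ⋆ g)) + k • (c ⋆ g))) - (g + w) := by abel
  rw [h0, ← heq, sub_self]

end CoreW

end S19
namespace S19

section CoreMain

variable {p : ℕ} [Fact p.Prime] {A : Type*} [FpBrace p A]

local notation a " ⋆ " b => LeftBrace.star a b

lemma socle_nontrivial (hcard : Nat.card A ∣ p ^ 4) (hp3 : 3 < p)
    (c : A) (hc0 : c ≠ 0)
    (hcen : ∀ g : A, c * g = g * c)
    (hpow : ∀ g h : A, ∃ k : ℕ, g * h = h * g * c ^ k)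
    (hcc : ∃ r s : A, r * s = s * r * c) :
    ∃ s0 : A, s0 ≠ 0 ∧ s0 ∈ socle p A := by
  have hp : p.Prime := Fact.out
  by_cases hczero : ∀ g : A, (c ⋆ g) = 0
  · exact ⟨c, hc0, hczero⟩
  push_neg at hczero
  obtain ⟨g₀, hg₀⟩ := hczero
  obtain ⟨r, s, hrs⟩ := hcc
  -- the operator `x ↦ c ⋆ x` drops the K-filtration by two
  have hdrop : ∀ (j : ℕ) (x : A), x ∈ Kchain p A (j+2) → (c ⋆ x) ∈ Kchain p A j := by
    intro j x hx
    have hkey : lam s (lam r (c ⋆ x)) = ((r ⋆ (s ⋆ x)) - (s ⋆ (r ⋆ x))) := by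
      have h1 : lam r (lam s x) = lam s (lam r (lam c x)) := by
        rw [← lam_mul s r (lam c x), ← lam_mul (s*r) c x, ← lam_mul r s x, hrs]
      have h2 : lam s (lam r (c ⋆ x)) = lam r (lam s x) - lam s (lam r x) := by
        rw [star_eq_lam_sub, lam_sub, lam_sub, h1]
      have h3 : lam r (lam s x) = (r ⋆ (s ⋆ x)) + (r ⋆ x) + ((s ⋆ x) + x) := by
        rw [lam_eq_star_add s x, lam_eq_star_add r _, star_add_right]
      have h4 : lam s (lam r x) = (s ⋆ (r ⋆ x)) + (s ⋆ x) + ((r ⋆ x) + x) := by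
        rw [lam_eq_star_add r x, lam_eq_star_add s _, star_add_right]
      rw [h2, h3, h4]
      abel
    have hD : ((r ⋆ (s ⋆ x)) - (s ⋆ (r ⋆ x))) ∈ Kchain p A j :=
      sub_mem (star_mem_Kchain (star_mem_Kchain hx s) r)
        (star_mem_Kchain (star_mem_Kchain hx r) s)
    have hcx : (c ⋆ x) = lam r⁻¹ (lam s⁻¹ ((r ⋆ (s ⋆ x)) - (s ⋆ (r ⋆ x)))) := by
      rw [← hkey, lam_inv_lam, lam_inv_lam]
    rw [hcx]
    exact lam_mem_Kchain (lam_mem_Kchain hD s⁻¹) r⁻¹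
  have hK4 : Kchain p A 4 = ⊤ := Kchain_four_eq_top hcard
  have hmem4 : ∀ x : A, x ∈ Kchain p A 4 := fun x => hK4 ▸ Submodule.mem_top
  have hK0 : ∀ x : A, x ∈ Kchain p A 0 → x = 0 := by
    intro x hx
    simpa [Kchain] using hx
  have hn2 : ∀ x : A, (c ⋆ (c ⋆ x)) = 0 := fun x =>
    hK0 _ (hdrop 0 _ (hdrop 2 x (hmem4 x)))
  -- pick a nonzero fixed vector w
  haveI : Nontrivial A := ⟨⟨c, 0, hc0⟩⟩
  have hK0ne : Kchain p A 0 ≠ ⊤ := by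
    show (⊥ : Submodule (ZMod p) A) ≠ ⊤
    exact bot_ne_top
  obtain ⟨w, hw1, hw0'⟩ := kchain_exists_of_ne_top hcard hK0ne
  have hw : ∀ g : A, (g ⋆ w) = 0 := fun g => hK0 _ (star_mem_Kchain hw1 g)
  have hw0 : w ≠ 0 := by
    intro h
    exact hw0' (by simp [h, Kchain])
  by_cases hncc : (c ⋆ c) = 0
  · -- Case II : c ⋆ c = 0
    by_cases hcin : ∃ y : A, (c ⋆ y) = c
    · -- c in the image of (c ⋆ ·): contradiction with hg₀
      obtain ⟨y, hy⟩ := hcin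
      have hc2 : c ∈ Kchain p A 2 := by
        rw [← hy]
        exact hdrop 2 y (hmem4 y)
      have hc1 : c ∈ Kchain p A 1 := by
        rw [← hy, star_comm_of_commute (hcen y)]
        exact star_mem_Kchain hc2 y
      have : (c ⋆ g₀) = 0 := by
        have h1 : (g₀ ⋆ c) = 0 := hK0 _ (star_mem_Kchain hc1 g₀)
        rwa [star_comm_of_commute (hcen g₀)]
      exact absurd this hg₀
    · -- build the functional ξ
      set N : Submodule (ZMod p) A := LinearMap.range (stL p c) with hNdef
      have hcN : c ∉ N := by
        intro hc
        obtain ⟨y, hy⟩ := hc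
        exact hcin ⟨y, by simpa using hy⟩
      have hmkc : (Submodule.Quotient.mk c : A ⧸ N) ≠ 0 := by
        rw [Ne, Submodule.Quotient.mk_eq_zero]
        exact hcN
      have hφ : ∃ φ : Module.Dual (ZMod p) (A ⧸ N), φ (Submodule.Quotient.mk c) ≠ 0 := by
        by_contra hcon
        push_neg at hcon
        exact hmkc ((Module.forall_dual_apply_eq_zero_iff (ZMod p) _).mp hcon)
      obtain ⟨φ, hφ⟩ := hφ
      set ξ : A →ₗ[ZMod p] ZMod p := (φ (Submodule.Quotient.mk c))⁻¹ • (φ ∘ₗ N.mkQ) with hξdef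
      have hξc : ξ c = 1 := by
        show (φ (Submodule.Quotient.mk c))⁻¹ • (φ (N.mkQ c)) = 1
        rw [Submodule.mkQ_apply, smul_eq_mul, inv_mul_cancel₀ hφ]
      have hξn : ∀ x : A, ξ (c ⋆ x) = 0 := by
        intro x
        have hmem : (c ⋆ x) ∈ N := ⟨x, rfl⟩
        show (φ (Submodule.Quotient.mk c))⁻¹ • (φ (N.mkQ (c ⋆ x))) = 0
        rw [Submodule.mkQ_apply, (Submodule.Quotient.mk_eq_zero N).mpr hmem, map_zero, smul_zero]
      -- W1 simplification
      set μ : A →ₗ[ZMod p] ZMod p := -(ξ ∘ₗ stL p w) with hμdef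
      have hμapp : ∀ g : A, μ g = -(ξ (w ⋆ g)) := fun g => rfl
      have hform : ∀ g : A, (w ⋆ g) + (μ g) • (c ⋆ g) + (μ g) • c = 0 := by
        intro g
        obtain ⟨k, hk⟩ := hpow g w
        have hW := W1 hcen hn2 hw hk
        rw [hncc, smul_zero, add_zero] at hW
        have hW2 : (c ⋆ (w ⋆ g)) = 0 := by
          have hc' := congrArg (fun z => (c ⋆ z)) hW
          simp only [star_add_right, star_nsmul_right, star_zero_right, hn2, smul_zero,
            add_zero, zero_add, hncc] at hc'
          exact hc'
        rw [hW2, smul_zero, add_zero] at hW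
        -- apply ξ to get k mod p = μ g
        have hξW := congrArg ξ hW
        rw [map_add, map_add, map_nsmul, map_nsmul, hξn, hξc, map_zero, smul_zero, add_zero] at hξW
        have hsum : ξ (w ⋆ g) + (k : ZMod p) = 0 := by
          rw [← hξW]
          congr 1
          rw [nsmul_eq_mul, mul_one]
        have hkμ : ((k : ZMod p)) = μ g := by
          rw [hμapp]
          exact eq_neg_of_add_eq_zero_right hsum
        rw [nsmul_eq_cast_smul (p := p) k (c ⋆ g), nsmul_eq_cast_smul (p := p) k c, hkμ] at hW
        exact hW
      by_cases hμ0 : ∀ g : A, μ g = 0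
      · refine ⟨w, hw0, fun g => ?_⟩
        have := hform g
        rwa [hμ0 g, zero_smul, zero_smul, add_zero, add_zero] at this
      · push_neg at hμ0
        obtain ⟨h₁, hh₁⟩ := hμ0
        set h := (μ h₁)⁻¹ • h₁ with hhdef
        have hμh : μ h = 1 := by
          rw [hhdef, map_smul, smul_eq_mul, inv_mul_cancel₀ hh₁]
        have hpol : ∀ g g' : A, (μ g) • (c ⋆ g') + (μ g') • (c ⋆ g) = 0 := by
          intro g g'
          have E1 := hform g
          have E2 := hform g'
          have E3 := hform (g + g')
          rw [star_add_right, star_add_right, map_add] at E3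
          have key : (μ g) • (c ⋆ g') + (μ g') • (c ⋆ g)
              = ((w ⋆ g) + (w ⋆ g') + (μ g + μ g') • ((c ⋆ g) + (c ⋆ g'))
                  + (μ g + μ g') • c)
                - ((w ⋆ g) + (μ g) • (c ⋆ g) + (μ g) • c)
                - ((w ⋆ g') + (μ g') • (c ⋆ g') + (μ g') • c) := by
            simp only [add_smul, smul_add]
            abel
          have E3' : (w ⋆ g) + (w ⋆ g') + (μ g + μ g') • ((c ⋆ g) + (c ⋆ g'))
                  + (μ g + μ g') • c = 0 := by rw [← E3]
          rw [key, E1, E2, E3']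
          simp
        have hch : (c ⋆ h) = 0 := by
          have := hpol h h
          rw [hμh, one_smul] at this
          have h2 : (2 : ZMod p) • (c ⋆ h) = 0 := by
            rw [two_smul]; exact this
          have := congrArg (fun z => ((2 : ZMod p))⁻¹ • z) h2
          simpa [smul_smul, inv_mul_cancel₀ (two_ne_zero'' hp3)] using this
        exfalso
        apply hg₀
        have := hpol g₀ h
        rw [hμh, one_smul, hch, smul_zero, zero_add] at this
        exact this
  · -- Case I : c ⋆ c ≠ 0 ; show w ∈ socle
    refine ⟨w, hw0, fun g => ?_⟩
    obtain ⟨k, hk⟩ := hpow g w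
    have hW := W1 hcen hn2 hw hk
    have hW2 : (c ⋆ (w ⋆ g)) + k • (c ⋆ c) = 0 := by
      have hc' := congrArg (fun z => (c ⋆ z)) hW
      simp only [star_add_right, star_nsmul_right, star_zero_right, hn2, smul_zero,
        add_zero, zero_add] at hc'
      exact hc'
    obtain ⟨k', hk'⟩ := hpow (c ⋆ g) w
    have hW3 := W1 hcen hn2 hw hk'
    have e1 : (w ⋆ (c ⋆ g)) = (c ⋆ (w ⋆ g)) := (star_star_of_commute (hcen w) g).symm
    rw [e1, hn2, smul_zero, add_zero, hn2, smul_zero, add_zero] at hW3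
    -- hW3 : (c ⋆ (w ⋆ g)) + k' • c + (k'.choose 2) • (c ⋆ c) = 0
    have hsub : k' • c + (k'.choose 2) • (c ⋆ c) - k • (c ⋆ c) = 0 := by
      have heq : k' • c + (k'.choose 2) • (c ⋆ c) - k • (c ⋆ c)
          = ((c ⋆ (w ⋆ g)) + k' • c + (k'.choose 2) • (c ⋆ c))
            - ((c ⋆ (w ⋆ g)) + k • (c ⋆ c)) := by abel
      rw [heq, hW3, hW2, sub_zero]
    have hk'0 : ((k' : ZMod p)) = 0 := by
      by_contra hkz
      -- then c is a multiple of c ⋆ c, which forces c ⋆ c = 0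
      have hceq : c = ((k' : ZMod p))⁻¹ •
          (((k : ZMod p) - ((k'.choose 2 : ℕ) : ZMod p)) • (c ⋆ c)) := by
        have h1 : ((k' : ZMod p)) • c
            = ((k : ZMod p) - ((k'.choose 2 : ℕ) : ZMod p)) • (c ⋆ c) := by
          rw [sub_smul, ← nsmul_eq_cast_smul (p := p), ← nsmul_eq_cast_smul (p := p),
            ← nsmul_eq_cast_smul (p := p)]
          have : k' • c = k • (c ⋆ c) - (k'.choose 2) • (c ⋆ c) := by
            have h2 : k' • c = (k' • c + (k'.choose 2) • (c ⋆ c) - k • (c ⋆ c))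
                + (k • (c ⋆ c) - (k'.choose 2) • (c ⋆ c)) := by abel
            rw [h2, hsub, zero_add]
          exact this
        have := congrArg (fun z => ((k' : ZMod p))⁻¹ • z) h1
        simpa [smul_smul, inv_mul_cancel₀ hkz] using this
      have : (c ⋆ c) = 0 := by
        nth_rewrite 2 [hceq]
        rw [FpBrace.star_smul', FpBrace.star_smul', hn2, smul_zero, smul_zero]
      exact absurd this hncc
    have hch'0 : (((k'.choose 2 : ℕ)) : ZMod p) = 0 := choose_two_cast_eq_zero hp3 hk'0
    have hkncc : k • (c ⋆ c) = 0 := by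
      have h2 : k • (c ⋆ c) = -(k' • c + (k'.choose 2) • (c ⋆ c) - k • (c ⋆ c))
          + (k' • c + (k'.choose 2) • (c ⋆ c)) := by abel
      rw [h2, hsub, neg_zero, zero_add, nsmul_eq_zero_of_cast (p := p) hk'0,
        nsmul_eq_zero_of_cast (p := p) hch'0, add_zero]
    have hk0 : ((k : ZMod p)) = 0 := by
      by_contra hkz
      have h1 : ((k : ZMod p)) • (c ⋆ c) = 0 := by
        rw [← nsmul_eq_cast_smul (p := p)]; exact hkncc
      have := congrArg (fun z => ((k : ZMod p))⁻¹ • z) h1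
      simp only [smul_smul, inv_mul_cancel₀ hkz, one_smul, smul_zero] at this
      exact absurd this hncc
    have hch0 : (((k.choose 2 : ℕ)) : ZMod p) = 0 := choose_two_cast_eq_zero hp3 hk0
    rw [nsmul_eq_zero_of_cast (p := p) hk0, nsmul_eq_zero_of_cast (p := p) hk0,
      nsmul_eq_zero_of_cast (p := p) hk0, nsmul_eq_zero_of_cast (p := p) hch0,
      add_zero, add_zero, add_zero, add_zero] at hW
    exact hW

end CoreMain

end S19
namespace S19

section Quot

variable {p : ℕ} [Fact p.Prime] {A : Type*} [FpBrace p A]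

local notation a " ⋆ " b => LeftBrace.star a b

lemma lam_mem_socle {t : A} (ht : t ∈ socle p A) (g : A) : lam g t ∈ socle p A :=
  fun x => lam_socle_aux ht g x

lemma socle_mul_congr {a a' b b' : A} (ha : a - a' ∈ socle p A) (hb : b - b' ∈ socle p A) :
    a * b - a' * b' ∈ socle p A := by
  obtain ⟨s, hs, rfl⟩ : ∃ s ∈ socle p A, a = s + a' := ⟨a - a', ha, by abel⟩
  obtain ⟨t, ht, rfl⟩ : ∃ t ∈ socle p A, b = b' + t := ⟨b - b', hb, by abel⟩
  have e1 : s + a' = s * a' := (socle_mul (mem_socle_iff.mp hs) a').symm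
  have e2 : a' * (b' + t) = a' * b' + lam a' t := by
    rw [mul_eq a' (b' + t), lam_add, mul_eq a' b']
    abel
  have e3 : (s + a') * (b' + t) = s + (a' * b' + lam a' t) := by
    rw [e1, mul_assoc, socle_mul (mem_socle_iff.mp hs), e2]
  rw [e3]
  have e4 : s + (a' * b' + lam a' t) - a' * b' = s + lam a' t := by abel
  rw [e4]
  exact add_mem hs (lam_mem_socle ht a')

lemma socle_inv_congr {a a' : A} (h : a - a' ∈ socle p A) : a⁻¹ - a'⁻¹ ∈ socle p A := by
  obtain ⟨s, hs, rfl⟩ : ∃ s ∈ socle p A, a = s + a' := ⟨a - a', h, by abel⟩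
  have e1 : s + a' = s * a' := (socle_mul (mem_socle_iff.mp hs) a').symm
  have hsinv : s⁻¹ = -s := inv_eq_neg_of_socle (mem_socle_iff.mp hs)
  rw [e1, mul_inv_rev, hsinv, mul_eq a'⁻¹ (-s)]
  have e2 : a'⁻¹ + lam a'⁻¹ (-s) - a'⁻¹ = lam a'⁻¹ (-s) := by abel
  rw [e2]
  exact lam_mem_socle (neg_mem hs) a'⁻¹

instance quotGroup : Group (A ⧸ socle p A) where
  mul := fun x y => Quotient.liftOn₂ x y (fun a b => Submodule.Quotient.mk (a * b))
    (fun a₁ b₁ a₂ b₂ ha hb => (Submodule.Quotient.eq _).mpr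
      (socle_mul_congr ((Submodule.quotientRel_def _).mp ha)
        ((Submodule.quotientRel_def _).mp hb)))
  one := Submodule.Quotient.mk 1
  inv := fun x => Quotient.liftOn x (fun a => Submodule.Quotient.mk a⁻¹)
    (fun a₁ a₂ ha => (Submodule.Quotient.eq _).mpr
      (socle_inv_congr ((Submodule.quotientRel_def _).mp ha)))
  mul_assoc := by
    intro x y z
    obtain ⟨a, rfl⟩ := Submodule.Quotient.mk_surjective _ x
    obtain ⟨b, rfl⟩ := Submodule.Quotient.mk_surjective _ y
    obtain ⟨c, rfl⟩ := Submodule.Quotient.mk_surjective _ z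
    show Submodule.Quotient.mk _ = Submodule.Quotient.mk _
    rw [mul_assoc]
  one_mul := by
    intro x
    obtain ⟨a, rfl⟩ := Submodule.Quotient.mk_surjective _ x
    show Submodule.Quotient.mk _ = Submodule.Quotient.mk _
    rw [one_mul]
  mul_one := by
    intro x
    obtain ⟨a, rfl⟩ := Submodule.Quotient.mk_surjective _ x
    show Submodule.Quotient.mk _ = Submodule.Quotient.mk _
    rw [mul_one]
  inv_mul_cancel := by
    intro x
    obtain ⟨a, rfl⟩ := Submodule.Quotient.mk_surjective _ x
    show Submodule.Quotient.mk _ = Submodule.Quotient.mk _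
    rw [inv_mul_cancel]

lemma quot_mk_mul (a b : A) :
    (Submodule.Quotient.mk a * Submodule.Quotient.mk b : A ⧸ socle p A)
      = Submodule.Quotient.mk (a * b) := rfl

lemma quot_mk_one : ((1 : A ⧸ socle p A)) = Submodule.Quotient.mk (1 : A) := rfl

instance quotLeftBrace : LeftBrace (A ⧸ socle p A) :=
  { (quotGroup : Group (A ⧸ socle p A)),
    (Submodule.Quotient.addCommGroup (socle p A)) with
    mul_add_eq := by
      intro x y z
      obtain ⟨a, rfl⟩ := Submodule.Quotient.mk_surjective _ x
      obtain ⟨b, rfl⟩ := Submodule.Quotient.mk_surjective _ y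
      obtain ⟨c, rfl⟩ := Submodule.Quotient.mk_surjective _ z
      rw [← Submodule.Quotient.mk_add, quot_mk_mul, quot_mk_mul, quot_mk_mul,
        ← Submodule.Quotient.mk_add, ← Submodule.Quotient.mk_add]
      exact congrArg _ (LeftBrace.mul_add_eq a b c) }

lemma quot_mk_star (a b : A) :
    LeftBrace.star (Submodule.Quotient.mk a) (Submodule.Quotient.mk b : A ⧸ socle p A)
      = Submodule.Quotient.mk (a ⋆ b) := by
  show (Submodule.Quotient.mk a * Submodule.Quotient.mk b : A ⧸ socle p A)
      - Submodule.Quotient.mk a - Submodule.Quotient.mk b = _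
  rw [quot_mk_mul, ← Submodule.Quotient.mk_sub, ← Submodule.Quotient.mk_sub]
  rfl

instance quotFpBrace : FpBrace p (A ⧸ socle p A) :=
  { (quotLeftBrace : LeftBrace (A ⧸ socle p A)),
    (Submodule.Quotient.module (socle p A) : Module (ZMod p) (A ⧸ socle p A)) with
    star_smul' := by
      intro α x y
      obtain ⟨a, rfl⟩ := Submodule.Quotient.mk_surjective _ x
      obtain ⟨b, rfl⟩ := Submodule.Quotient.mk_surjective _ y
      rw [← Submodule.Quotient.mk_smul, quot_mk_star, quot_mk_star,
        ← Submodule.Quotient.mk_smul]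
      exact congrArg _ (FpBrace.star_smul' α a b) }

lemma quot_mk_pow (a : A) (k : ℕ) :
    (Submodule.Quotient.mk a : A ⧸ socle p A) ^ k = Submodule.Quotient.mk (a ^ k) := by
  induction k with
  | zero => rw [pow_zero, pow_zero, quot_mk_one]
  | succ k ih => rw [pow_succ, pow_succ, ih, quot_mk_mul]

end Quot

end S19
namespace S19

section Transfer

lemma rpow_eq_closure (B : Type*) [LeftBrace B] (n : ℕ) :
    rpow B (n+2) = AddSubgroup.closure
      {x : B | ∃ a ∈ rpow B (n+1), ∃ b : B, x = LeftBrace.star a b} := rfl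

lemma rpow_succ_le (B : Type*) [LeftBrace B] (n : ℕ) : rpow B (n+2) ≤ rpow B (n+1) := by
  induction n with
  | zero =>
      show rpow B 2 ≤ rpow B 1
      rw [show rpow B 1 = ⊤ from rfl]
      exact le_top
  | succ n ih =>
      rw [rpow_eq_closure B (n+1), rpow_eq_closure B n]
      apply AddSubgroup.closure_mono
      rintro x ⟨a, ha, b, rfl⟩
      exact ⟨a, ih ha, b, rfl⟩

variable {p : ℕ} [Fact p.Prime] {A : Type*} [FpBrace p A]

local notation a " ⋆ " b => LeftBrace.star a b

lemma rpow_map : ∀ n : ℕ,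
    (rpow A n).map ((socle p A).mkQ.toAddMonoidHom) = rpow (A ⧸ socle p A) n := by
  have hsurj : Function.Surjective ((socle p A).mkQ.toAddMonoidHom) :=
    Submodule.Quotient.mk_surjective _
  intro n
  induction n with
  | zero => exact AddSubgroup.map_top_of_surjective _ hsurj
  | succ n ih =>
      match n, ih with
      | 0, _ => exact AddSubgroup.map_top_of_surjective _ hsurj
      | (m+1), ih =>
          rw [rpow_eq_closure A m, rpow_eq_closure (A ⧸ socle p A) m,
            AddMonoidHom.map_closure]
          congr 1
          ext y
          constructor
          · rintro ⟨x, ⟨a, ha, b, rfl⟩, rfl⟩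
            refine ⟨Submodule.Quotient.mk a, ?_, Submodule.Quotient.mk b, ?_⟩
            · rw [← ih]
              exact AddSubgroup.mem_map_of_mem _ ha
            · exact (quot_mk_star a b).symm
          · rintro ⟨abar, habar, bbar, rfl⟩
            rw [← ih] at habar
            obtain ⟨a, ha, rfl⟩ := habar
            obtain ⟨b, rfl⟩ := hsurj bbar
            exact ⟨LeftBrace.star a b, ⟨a, ha, b, rfl⟩, (quot_mk_star a b)⟩

lemma isRightNilpotent_of_quot (h : IsRightNilpotent (A ⧸ socle p A)) :
    IsRightNilpotent A := by
  obtain ⟨N, hN⟩ := h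
  have hbot : rpow (A ⧸ socle p A) (N+2) = ⊥ := by
    match N, hN with
    | 0, hN =>
        have : (⊤ : AddSubgroup (A ⧸ socle p A)) = ⊥ := hN
        exact le_bot_iff.mp (this ▸ le_top)
    | 1, hN =>
        have : (⊤ : AddSubgroup (A ⧸ socle p A)) = ⊥ := hN
        exact le_bot_iff.mp (this ▸ le_top)
    | (M+2), hN =>
        exact le_bot_iff.mp (le_trans (rpow_succ_le _ _) (le_trans (rpow_succ_le _ _) hN.le))
  have hmap := rpow_map (p := p) (A := A) (N+2)
  rw [hbot] at hmap
  have hker : ∀ x ∈ rpow A (N+2), x ∈ socle p A := by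
    intro x hx
    have hx0 : ((socle p A).mkQ.toAddMonoidHom) x ∈ (⊥ : AddSubgroup (A ⧸ socle p A)) := by
      rw [← hmap]
      exact AddSubgroup.mem_map_of_mem _ hx
    rw [AddSubgroup.mem_bot] at hx0
    have : Submodule.Quotient.mk x = (0 : A ⧸ socle p A) := hx0
    exact (Submodule.Quotient.mk_eq_zero _).mp this
  refine ⟨N+3, ?_⟩
  rw [rpow_eq_closure A (N+1), eq_bot_iff, AddSubgroup.closure_le]
  rintro x ⟨a, ha, b, rfl⟩
  have : LeftBrace.star a b = 0 := hker a ha b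
  simp [this]

lemma rightNilpotent_of_comm (hcard : Nat.card A ∣ p ^ 4) (hcomm : ∀ g h : A, g * h = h * g) :
    IsRightNilpotent A := by
  have hK4 := Kchain_four_eq_top (p := p) (A := A) hcard
  have key : ∀ j : ℕ, rpow A (j+2) ≤ (Kchain p A (3-j)).toAddSubgroup := by
    intro j
    induction j with
    | zero =>
        rw [rpow_eq_closure A 0, AddSubgroup.closure_le]
        rintro x ⟨a, ha, b, rfl⟩
        simp only [SetLike.mem_coe, Submodule.mem_toAddSubgroup]
        rw [star_comm_of_commute (hcomm a b)]
        exact star_mem_Kchain (show a ∈ Kchain p A 4 from hK4 ▸ Submodule.mem_top) b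
    | succ j ih =>
        rw [rpow_eq_closure A (j+1), AddSubgroup.closure_le]
        rintro x ⟨a, ha, b, rfl⟩
        simp only [SetLike.mem_coe, Submodule.mem_toAddSubgroup]
        rw [star_comm_of_commute (hcomm a b)]
        have haK := ih ha
        simp only [Submodule.mem_toAddSubgroup] at haK
        rcases Nat.lt_or_ge j 3 with hj | hj
        · have h32 : 3 - j = (3 - (j+1)) + 1 := by omega
          rw [h32] at haK
          exact star_mem_Kchain haK b
        · have h0 : (3 - j) = 0 := by omega
          rw [h0] at haK
          have ha0 : a = 0 := by simpa [Kchain] using haK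
          rw [ha0, star_zero_right]
          exact zero_mem _
  refine ⟨5, le_bot_iff.mp ?_⟩
  have h5 := key 3
  have : (Kchain p A (3-3)).toAddSubgroup = ⊥ := by
    show (Kchain p A 0).toAddSubgroup = ⊥
    rw [show Kchain p A 0 = ⊥ from rfl]
    rfl
  rw [this] at h5
  exact h5

end Transfer

end S19
namespace S19

section GroupThy

variable {G : Type*} [Group G]

lemma central_of_gen {P Q R S : G}
    (hgen : Subgroup.closure {P, Q, R, S} = ⊤)
    (hQP : Q * P = P * Q) (hPR : P * R = R * P) (hPS : P * S = S * P) :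
    ∀ g : G, P * g = g * P := by
  intro g
  have hsub : Subgroup.closure {P, Q, R, S} ≤ Subgroup.centralizer {P} := by
    rw [Subgroup.closure_le]
    intro x hx
    simp only [Set.mem_insert_iff, Set.mem_singleton_iff] at hx
    rw [SetLike.mem_coe, Subgroup.mem_centralizer_iff]
    intro y hy
    rw [Set.mem_singleton_iff] at hy
    subst hy
    rcases hx with rfl | rfl | rfl | rfl
    · rfl
    · exact hQP.symm
    · exact hPR
    · exact hPS
  have hg : g ∈ Subgroup.centralizer {P} := hsub (hgen ▸ Subgroup.mem_top g)
  exact Subgroup.mem_centralizer_iff.mp hg P (Set.mem_singleton P)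

lemma commutator_pow {P Q R S : G}
    (hgen : Subgroup.closure {P, Q, R, S} = ⊤)
    (hQP : Q * P = P * Q) (hQR : Q * R = R * Q) (hQS : Q * S = S * Q)
    (hPR : P * R = R * P) (hPS : P * S = S * P) (hRS : R * S = S * R * P)
    {n : ℕ} (hn : 0 < n) (hPp : P ^ n = 1) :
    ∀ g h : G, ∃ k : ℕ, g * h = h * g * P ^ k := by
  have hPc := central_of_gen hgen hQP hPR hPS
  haveI hnormal : (Subgroup.zpowers P).Normal := by
    constructor
    intro x hx g
    obtain ⟨z, rfl⟩ := Subgroup.mem_zpowers_iff.mp hx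
    have hc : Commute g P := (hPc g).symm
    have : g * P ^ z * g⁻¹ = P ^ z := by
      rw [(hc.zpow_right z).eq, mul_inv_cancel_right]
    rw [this]
    exact Subgroup.zpow_mem_zpowers P z
  set N := Subgroup.zpowers P with hNdef
  have hP1 : (QuotientGroup.mk' N) P = 1 := by
    rw [QuotientGroup.mk'_apply, QuotientGroup.eq_one_iff]
    exact Subgroup.mem_zpowers P
  have hgenQ : Subgroup.closure ((QuotientGroup.mk' N) '' {P, Q, R, S}) = ⊤ := by
    rw [← MonoidHom.map_closure, hgen]
    exact Subgroup.map_top_of_surjective _ (QuotientGroup.mk'_surjective N)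
  have hmk : ∀ u v : G, u * v = v * u →
      (QuotientGroup.mk' N) u * (QuotientGroup.mk' N) v
        = (QuotientGroup.mk' N) v * (QuotientGroup.mk' N) u := by
    intro u v h
    rw [← map_mul, ← map_mul, h]
  have hRSq : (QuotientGroup.mk' N) R * (QuotientGroup.mk' N) S
      = (QuotientGroup.mk' N) S * (QuotientGroup.mk' N) R := by
    rw [← map_mul, ← map_mul, hRS, map_mul, hP1, mul_one]
  have hcommgen : ∀ x ∈ (QuotientGroup.mk' N) '' {P, Q, R, S},
      ∀ y ∈ (QuotientGroup.mk' N) '' {P, Q, R, S}, Commute x y := by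
    rintro x ⟨a, ha, rfl⟩ y ⟨b, hb, rfl⟩
    simp only [Set.mem_insert_iff, Set.mem_singleton_iff] at ha hb
    rcases ha with rfl | rfl | rfl | rfl <;> rcases hb with rfl | rfl | rfl | rfl <;>
      first
        | rfl
        | (show _ * _ = _ * _; simp only [hP1, one_mul, mul_one])
        | exact hmk _ _ hQR
        | exact hmk _ _ hQR.symm
        | exact hmk _ _ hQS
        | exact hmk _ _ hQS.symm
        | exact hRSq
        | exact hRSq.symm
  have step1 : ∀ z ∈ (QuotientGroup.mk' N) '' {P, Q, R, S}, ∀ w : G ⧸ N, Commute z w := by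
    intro z hz w
    have hw : w ∈ Subgroup.closure ((QuotientGroup.mk' N) '' {P, Q, R, S}) :=
      hgenQ ▸ Subgroup.mem_top w
    induction hw using Subgroup.closure_induction with
    | mem w' hw' => exact hcommgen z hz w' hw'
    | one => exact Commute.one_right z
    | mul w1 w2 hw1 hw2 h1 h2 => exact Commute.mul_right h1 h2
    | inv w' hw' h => exact Commute.inv_right h
  have hcommQ : ∀ x y : G ⧸ N, x * y = y * x := by
    intro x y
    have hx : x ∈ Subgroup.closure ((QuotientGroup.mk' N) '' {P, Q, R, S}) :=
      hgenQ ▸ Subgroup.mem_top x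
    induction hx using Subgroup.closure_induction with
    | mem z hz => exact step1 z hz y
    | one => exact Commute.one_left y
    | mul x1 x2 hx1 hx2 h1 h2 => exact Commute.mul_left h1 h2
    | inv x' hx' h => exact Commute.inv_left h
  intro g h
  have hq : (QuotientGroup.mk' N) (h * g) = (QuotientGroup.mk' N) (g * h) := by
    rw [map_mul, map_mul, hcommQ]
  have hmem : (h * g)⁻¹ * (g * h) ∈ N := by
    rw [← QuotientGroup.eq]
    exact hq
  obtain ⟨z, hz⟩ := Subgroup.mem_zpowers_iff.mp hmem
  have hznn : P ^ z = P ^ ((z % (n:ℤ)).toNat) := by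
    have h1 : P ^ z = P ^ (z % (n:ℤ)) * P ^ ((n:ℤ) * (z / (n:ℤ))) := by
      rw [← zpow_add, Int.emod_add_mul_ediv]
    have h2 : P ^ ((n:ℤ) * (z / (n:ℤ))) = 1 := by
      rw [zpow_mul, zpow_natCast, hPp, one_zpow]
    have h3 : P ^ (z % (n:ℤ)) = P ^ ((z % (n:ℤ)).toNat) := by
      rw [← zpow_natCast, Int.toNat_of_nonneg (Int.emod_nonneg z (by exact_mod_cast hn.ne'))]
    rw [h1, h2, mul_one, h3]
  refine ⟨(z % (n:ℤ)).toNat, ?_⟩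
  rw [← hznn, hz, mul_inv_cancel_left]

end GroupThy

section Main

universe u

lemma aux (p : ℕ) [Fact p.Prime] (hp3 : 3 < p) :
    ∀ (N : ℕ) (A : Type u) [FpBrace p A], Nat.card A ∣ p ^ 4 → Nat.card A ≤ N →
    (∃ c : A, (∀ g : A, c * g = g * c) ∧ (∀ g h : A, ∃ k : ℕ, g * h = h * g * c ^ k) ∧
      (∃ r s : A, r * s = s * r * c)) → IsRightNilpotent A := by
  intro N
  induction N with
  | zero =>
      intro A _ hdvd hle _
      exfalso
      have hp : p.Prime := Fact.out
      have h0 : Nat.card A = 0 := Nat.le_zero.mp hle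
      rw [h0, zero_dvd_iff] at hdvd
      exact pow_ne_zero 4 hp.ne_zero hdvd
  | succ N ih =>
      intro A _ hdvd hle hC
      obtain ⟨c, hcen, hpow, hcc⟩ := hC
      by_cases hc0 : c = 0
      · apply rightNilpotent_of_comm hdvd
        intro g h
        obtain ⟨k, hk⟩ := hpow g h
        rw [hc0, ← one_eq_zero, one_pow, mul_one] at hk
        exact hk
      · obtain ⟨s0, hs0, hsoc⟩ := socle_nontrivial hdvd hp3 c hc0 hcen hpow hcc
        haveI : Finite A := finite_of_card_dvd hdvd
        apply isRightNilpotent_of_quot (p := p)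
        have hcard2 : Nat.card A = Nat.card (A ⧸ (socle p A).toAddSubgroup)
            * Nat.card ((socle p A).toAddSubgroup) :=
          AddSubgroup.card_eq_card_quotient_mul_card_addSubgroup _
        have hQA : Nat.card (A ⧸ socle p A) = Nat.card (A ⧸ (socle p A).toAddSubgroup) := rfl
        haveI : Nontrivial ((socle p A).toAddSubgroup) :=
          ⟨⟨s0, (Submodule.mem_toAddSubgroup _).mpr hsoc⟩, 0, by simp [hs0]⟩
        have hSge : 2 ≤ Nat.card ((socle p A).toAddSubgroup) :=
          Finite.one_lt_card_iff_nontrivial.mpr ‹_›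
        haveI : Finite (A ⧸ socle p A) :=
          Finite.of_surjective _ (Submodule.Quotient.mk_surjective (socle p A))
        have hQpos : 0 < Nat.card (A ⧸ socle p A) := Nat.card_pos
        have hdvd' : Nat.card (A ⧸ socle p A) ∣ Nat.card A := by
          rw [hQA, hcard2]
          exact dvd_mul_right _ _
        have hdvdQ : Nat.card (A ⧸ socle p A) ∣ p ^ 4 := dvd_trans hdvd' hdvd
        have h2q : 2 * Nat.card (A ⧸ (socle p A).toAddSubgroup) ≤ Nat.card A := by
          rw [hcard2, mul_comm]
          exact Nat.mul_le_mul_left _ hSge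
        have hleQ : Nat.card (A ⧸ socle p A) ≤ N := by
          rw [hQA] at hQpos ⊢
          omega
        refine ih (A ⧸ socle p A) hdvdQ hleQ ?_
        refine ⟨Submodule.Quotient.mk c, ?_, ?_, ?_⟩
        · intro gbar
          obtain ⟨g, rfl⟩ := Submodule.Quotient.mk_surjective _ gbar
          rw [quot_mk_mul, quot_mk_mul, hcen g]
        · intro gbar hbar
          obtain ⟨g, rfl⟩ := Submodule.Quotient.mk_surjective _ gbar
          obtain ⟨h, rfl⟩ := Submodule.Quotient.mk_surjective _ hbar
          obtain ⟨k, hk⟩ := hpow g h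
          exact ⟨k, by rw [quot_mk_mul, quot_mk_mul, quot_mk_pow, quot_mk_mul, hk]⟩
        · obtain ⟨r, s, hrs⟩ := hcc
          exact ⟨Submodule.Quotient.mk r, Submodule.Quotient.mk s, by
            rw [quot_mk_mul, quot_mk_mul, quot_mk_mul, hrs]⟩

end Main

end S19
/-- an `𝔽ₚ`-brace of cardinality `p⁴` whose multiplicative group is the
group XIV is right nilpotent. -/
theorem statement19 (p : ℕ) (hp : p.Prime) (hp3 : 3 < p) (A : Type*) [FpBrace p A]
    (hcard : Nat.card A = p ^ 4)
    (hXIV : ∃ P Q R S : A,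
      Subgroup.closure {P, Q, R, S} = ⊤ ∧ XIVRelations p P Q R S) :
    IsRightNilpotent A := by
  haveI : Fact p.Prime := ⟨hp⟩
  obtain ⟨P, Q, R, S, hgen, hrel⟩ := hXIV
  obtain ⟨hQP, hQR, hQS, hPR, hPS, hRS, hPp, hQp, hRp, hSp⟩ := hrel
  have hcen := S19.central_of_gen hgen hQP hPR hPS
  have hpow := S19.commutator_pow hgen hQP hQR hQS hPR hPS hRS hp.pos hPp
  exact S19.aux p hp3 (p ^ 4) A (by rw [hcard]) (by rw [hcard]) ⟨P, hcen, hpow, ⟨R, S, hRS⟩⟩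
end
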